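/- For every integer n ≥ 1, the sum over all permutations π ∈ S_n of 2^{n − lrmin(π)} equals the double factorial (2n−1)!! = Π_{i=1}^{n} (2i−1). Equivalently, the number of marked permutations of {1,…,n} is (2n−1)!!. -/

import Mathlib

open Finset

section Defs

variable {m : ℕ} {α : Type*}

def lrminFilter [LinearOrder α] (f : Fin m → α) : Finset (Fin m) :=
  univ.filter fun i => ∀ j, j < i → f i < f j

def lrminCount [LinearOrder α] (f : Fin m → α) : ℕ :=
  (lrminFilter f).card

def lrminSet [LinearOrder α] [DecidableEq α] (f : Fin m → α) : Finset α :=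
  (lrminFilter f).image f

def ascFilter [LinearOrder α] (f : Fin m → α) : Finset (Fin m) :=
  univ.filter fun i => ∃ j : Fin m, (j : ℕ) + 1 = (i : ℕ) ∧ f j < f i

def ascCount [LinearOrder α] (f : Fin m → α) : ℕ :=
  (ascFilter f).card

def ascSet [LinearOrder α] [DecidableEq α] (f : Fin m → α) : Finset α :=
  (ascFilter f).image f

def apFilter [LinearOrder α] (f : Fin m → α) : Finset (Fin m) :=
  univ.filter fun i =>
    ∃ j k : Fin m, (j : ℕ) + 1 = (i : ℕ) ∧ (i : ℕ) + 1 = (k : ℕ) ∧ f j < f i ∧ f i = f k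

def apCount [LinearOrder α] (f : Fin m → α) : ℕ := (apFilter f).card

def apSet [LinearOrder α] [DecidableEq α] (f : Fin m → α) : Finset α := (apFilter f).image f

def evenFilter [DecidableEq α] (f : Fin m → α) : Finset (Fin m) :=
  univ.filter fun p => (p : ℕ) % 2 = 1 ∧ ∀ q, q < p → f q ≠ f p

def evenCount [DecidableEq α] (f : Fin m → α) : ℕ := (evenFilter f).card

def evenSet [DecidableEq α] (f : Fin m → α) : Finset α := (evenFilter f).image f

def desrlminCount [LinearOrder α] (f : Fin m → α) : ℕ :=
  (univ.filter fun i : Fin m =>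
    (∃ j : Fin m, (j : ℕ) + 1 = (i : ℕ) ∧ f i < f j) ∨ ∀ j, i < j → f i < f j).card

def isLRminPos [LinearOrder α] (f : Fin m → α) (i : Fin m) : Prop :=
  ∀ j, j < i → f i < f j

instance [LinearOrder α] (f : Fin m → α) : DecidablePred (isLRminPos f) := fun i => by
  unfold isLRminPos; infer_instance

def bk2Count [LinearOrder α] (f : Fin m → α) : ℕ :=
  (univ.filter fun i : Fin m =>
    isLRminPos f i ∧ (i : ℕ) + 1 < m ∧
      (∀ j : Fin m, (j : ℕ) = (i : ℕ) + 1 → ¬ isLRminPos f j) ∧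
      (∀ j : Fin m, (j : ℕ) = (i : ℕ) + 2 → isLRminPos f j)).card

end Defs

def IsStirling (n : ℕ) (f : Fin (2 * n) → Fin n) : Prop :=
  (∀ k : Fin n, (univ.filter fun p => f p = k).card = 2) ∧
    ∀ p q r : Fin (2 * n), p < q → q < r → f p = f r → f p < f q

instance (n : ℕ) : DecidablePred (IsStirling n) := fun f => by
  unfold IsStirling; infer_instance

def stirlingFinset (n : ℕ) : Finset (Fin (2 * n) → Fin n) :=
  univ.filter (IsStirling n)

def markedPerms (n : ℕ) : Finset (Equiv.Perm (Fin n) × Finset (Fin n)) :=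
  univ.filter fun pm => ∀ v ∈ pm.2, v ∉ lrminSet (⇑pm.1)


section Aux

variable {n : ℕ}

def ins (σ : Equiv.Perm (Fin n)) (k : Fin (n + 1)) : Equiv.Perm (Fin (n + 1)) :=
  (finSuccEquiv' k).trans (σ.optionCongr.trans (finSuccEquiv' (Fin.last n)).symm)

lemma ins_apply_self (σ : Equiv.Perm (Fin n)) (k : Fin (n + 1)) :
    ins σ k k = Fin.last n := by
  simp [ins, finSuccEquiv'_at]

lemma ins_apply_succAbove (σ : Equiv.Perm (Fin n)) (k : Fin (n + 1)) (j : Fin n) :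
    ins σ k (k.succAbove j) = (σ j).castSucc := by
  simp [ins, finSuccEquiv'_succAbove, finSuccEquiv'_symm_some]

lemma mem_lrminFilter {f : Fin m → Fin m} {i : Fin m} :
    i ∈ lrminFilter f ↔ ∀ j, j < i → f i < f j := by
  simp [lrminFilter]

lemma lrminFilter_ins (σ : Equiv.Perm (Fin n)) (k : Fin (n + 1)) :
    lrminFilter ⇑(ins σ k) =
      (lrminFilter ⇑σ).map k.succAboveEmb ∪ (if k = 0 then {k} else ∅) := by
  ext i
  by_cases hik : i = k
  · subst hik
    constructor
    · intro hi
      rw [mem_lrminFilter] at hi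
      have h0 : i = 0 := by
        by_contra h0
        have := hi 0 (Fin.pos_of_ne_zero h0)
        rw [ins_apply_self] at this
        exact absurd (Fin.le_last _) (not_le_of_gt this)
      simp [h0]
    · intro hi
      simp only [mem_union, mem_map] at hi
      rcases hi with ⟨j, _, hj⟩ | hi
      · exact absurd hj (Fin.succAbove_ne _ _)
      · have h0 : i = 0 := by
          by_cases h : i = 0
          · exact h
          · simp [h] at hi
        rw [mem_lrminFilter]
        intro j hj
        rw [h0] at hj
        exact absurd hj (Fin.not_lt_zero j)
  · obtain ⟨j, rfl⟩ := Fin.exists_succAbove_eq hik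
    have hne : k.succAbove j ≠ k := Fin.succAbove_ne _ _
    have hmem : k.succAbove j ∉ (if k = 0 then ({k} : Finset (Fin (n+1))) else ∅) := by
      by_cases h0 : k = 0 <;> simp [h0, Fin.succ_ne_zero]
    simp only [mem_union, or_iff_left hmem, mem_map, Fin.succAboveEmb_apply]
    constructor
    · intro hi
      rw [mem_lrminFilter] at hi
      refine ⟨j, ?_, rfl⟩
      rw [mem_lrminFilter]
      intro j' hj'
      have := hi (k.succAbove j') (Fin.succAbove_lt_succAbove_iff.2 hj')
      rw [ins_apply_succAbove, ins_apply_succAbove] at this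
      exact Fin.castSucc_lt_castSucc_iff.1 this
    · rintro ⟨j', hj', hjj⟩
      have hj : j' = j := Fin.succAbove_right_injective hjj
      subst hj
      rw [mem_lrminFilter] at hj' ⊢
      intro i' hi'
      rw [ins_apply_succAbove]
      by_cases hik' : i' = k
      · subst hik'
        rw [ins_apply_self]
        exact Fin.castSucc_lt_last _
      · obtain ⟨j'', rfl⟩ := Fin.exists_succAbove_eq hik'
        rw [ins_apply_succAbove]
        exact Fin.castSucc_lt_castSucc_iff.2 (hj' j'' (Fin.succAbove_lt_succAbove_iff.1 hi'))

lemma lrminCount_ins (σ : Equiv.Perm (Fin n)) (k : Fin (n + 1)) :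
    lrminCount ⇑(ins σ k) = lrminCount ⇑σ + (if k = 0 then 1 else 0) := by
  rw [lrminCount, lrminFilter_ins, card_union_of_disjoint, card_map]
  · congr 1
    by_cases h0 : k = 0 <;> simp [h0]
  · rw [Finset.disjoint_right]
    intro a ha hb
    rw [mem_map] at hb
    obtain ⟨j, _, hj⟩ := hb
    by_cases h0 : k = 0
    · simp [h0] at ha
      apply Fin.succAbove_ne k j
      rw [Fin.succAboveEmb_apply] at hj
      rw [hj, ha, h0]
    · simp [h0] at ha

lemma ins_bijective :
    Function.Bijective (fun p : Equiv.Perm (Fin n) × Fin (n + 1) => ins p.1 p.2) := by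
  rw [Fintype.bijective_iff_injective_and_card]
  constructor
  · rintro ⟨σ, k⟩ ⟨σ', k'⟩ h
    simp only at h
    have hk : k = k' := by
      have h1 : ins σ k k' = Fin.last n := by rw [h, ins_apply_self]
      have h2 : ins σ k k = Fin.last n := ins_apply_self σ k
      exact ((ins σ k).injective (h2.trans h1.symm))
    subst hk
    have hσ : σ = σ' := by
      ext j
      have h1 : ins σ k (k.succAbove j) = ins σ' k (k.succAbove j) := by rw [h]
      rw [ins_apply_succAbove, ins_apply_succAbove] at h1
      exact congrArg Fin.val (Fin.castSucc_injective n h1)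
    rw [hσ]
  · simp [Fintype.card_perm, Nat.factorial_succ, mul_comm]

lemma lrminCount_le (σ : Equiv.Perm (Fin n)) : lrminCount ⇑σ ≤ n := by
  calc lrminCount ⇑σ ≤ (univ : Finset (Fin n)).card := Finset.card_filter_le _ _
  _ = n := by simp

lemma sum_lrmin (n : ℕ) :
    ∑ π : Equiv.Perm (Fin n), 2 ^ (n - lrminCount ⇑π)
      = ∏ i ∈ Finset.Icc 1 n, (2 * i - 1) := by
  induction n with
  | zero =>
    rw [show Finset.Icc 1 0 = ∅ from rfl, Finset.prod_empty]
    simp [lrminCount, lrminFilter]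
  | succ n ih =>
    rw [← Fintype.sum_bijective _ ins_bijective
      (fun p : Equiv.Perm (Fin n) × Fin (n + 1) => 2 ^ (n + 1 - lrminCount ⇑(ins p.1 p.2)))
      _ (fun p => rfl)]
    rw [Fintype.sum_prod_type]
    have key : ∀ σ : Equiv.Perm (Fin n),
        ∑ k : Fin (n + 1), 2 ^ (n + 1 - lrminCount ⇑(ins σ k))
          = (2 * (n + 1) - 1) * 2 ^ (n - lrminCount ⇑σ) := by
      intro σ
      have hL := lrminCount_le σ
      rw [Fin.sum_univ_succ]
      have h0 : lrminCount ⇑(ins σ (0 : Fin (n + 1))) = lrminCount ⇑σ + 1 := by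
        rw [lrminCount_ins]; simp
      have hs : ∀ k : Fin n, lrminCount ⇑(ins σ k.succ) = lrminCount ⇑σ := by
        intro k
        rw [lrminCount_ins]
        simp [Fin.succ_ne_zero]
      rw [h0]
      have : ∀ k : Fin n, 2 ^ (n + 1 - lrminCount ⇑(ins σ k.succ))
          = 2 * 2 ^ (n - lrminCount ⇑σ) := by
        intro k
        rw [hs k, ← pow_succ']
        congr 1
        omega
      rw [Finset.sum_congr rfl (fun k _ => this k), Finset.sum_const]
      simp only [card_univ, Fintype.card_fin, smul_eq_mul]
      have he : n + 1 - (lrminCount ⇑σ + 1) = n - lrminCount ⇑σ := by omega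
      rw [he, show 2 * (n + 1) - 1 = 2 * n + 1 from by omega]
      ring
    rw [Finset.sum_congr rfl (fun σ _ => key σ), ← Finset.mul_sum, ih,
      Finset.prod_Icc_succ_top (by omega), mul_comm]

lemma lrminSet_card (σ : Equiv.Perm (Fin n)) :
    (lrminSet ⇑σ).card = lrminCount ⇑σ := by
  rw [lrminSet, Finset.card_image_of_injective _ σ.injective, lrminCount]

lemma markedPerms_card (n : ℕ) :
    (markedPerms n).card = ∑ π : Equiv.Perm (Fin n), 2 ^ (n - lrminCount ⇑π) := by
  have hset : markedPerms n = univ.biUnion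
      (fun π : Equiv.Perm (Fin n) => ((lrminSet ⇑π)ᶜ.powerset).image (Prod.mk π)) := by
    ext pm
    obtain ⟨π, M⟩ := pm
    simp only [markedPerms, mem_filter, mem_univ, true_and, mem_biUnion, mem_image,
      mem_powerset, Prod.mk.injEq]
    constructor
    · intro h
      exact ⟨π, M, Finset.subset_iff.2 fun v hv => Finset.mem_compl.2 (h v hv), rfl, rfl⟩
    · rintro ⟨π', M', hM', rfl, rfl⟩
      intro v hv
      exact Finset.mem_compl.1 (hM' hv)
  rw [hset, Finset.card_biUnion]
  · apply Finset.sum_congr rfl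
    intro π _
    rw [Finset.card_image_of_injective _ (Prod.mk_right_injective π), Finset.card_powerset,
      Finset.card_compl, lrminSet_card]
    simp
  · intro π _ π' _ hne
    rw [Function.onFun, Finset.disjoint_left]
    rintro ⟨a, b⟩ ha hb
    simp only [mem_image, Prod.mk.injEq] at ha hb
    obtain ⟨x, -, hx1, -⟩ := ha
    obtain ⟨y, -, hy1, -⟩ := hb
    exact hne (hx1.trans hy1.symm)

end Aux

/-- Σ_{π ∈ S_n} 2^{n - lrmin(π)} = (2n-1)!!; equivalently the number of
marked permutations of {1,…,n} is (2n-1)!!. -/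
theorem stmt_10 (n : ℕ) (hn : 1 ≤ n) :
    (∑ π : Equiv.Perm (Fin n), 2 ^ (n - lrminCount ⇑π)
        = ∏ i ∈ Finset.Icc 1 n, (2 * i - 1)) ∧
      (markedPerms n).card = ∏ i ∈ Finset.Icc 1 n, (2 * i - 1) := by
  refine ⟨sum_lrmin n, ?_⟩
  rw [markedPerms_card, sum_lrmin]
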